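/- Let c̃ := min{sin(γπ/2), sin(γπ), √2/2} · ((1-γ)/2) · c_μ. Then for every η ∈ (0, π/2) and every p ∈ ℂ \ (-∞,0] with |arg p| ≤ π - η, writing r = |p|, one has |∫₀¹ p^α μ(α) dα| ≥ c̃ · r^{1-γ} if r ≤ 1, and |∫₀¹ p^α μ(α) dα| ≥ c̃ · r^{γ} if r > 1. -/

import Mathlib

open MeasureTheory Real Set

set_option maxHeartbeats 1000000 in
/-- With `c̃ := min{sin(γπ/2), sin(γπ), √2/2} · ((1-γ)/2) · c_μ`, for every
`η ∈ (0, π/2)` and every `p ∈ ℂ \ (-∞,0]` with `|arg p| ≤ π - η`, writing `r = |p|`,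
one has `|∫₀¹ p^α μ(α) dα| ≥ c̃ r^{1-γ}` if `r ≤ 1` and `≥ c̃ r^γ` if `r > 1`. -/
theorem stmt_4 (μ : ℝ → ℝ)
    (hμ_int : IntegrableOn μ (Ioo 0 1))
    (hμ_nonneg : ∀ α ∈ Ioo (0:ℝ) 1, 0 ≤ μ α)
    (hμ_ne : ¬ (∀ᵐ α ∂(volume.restrict (Ioo (0:ℝ) 1)), μ α = 0))
    (hcμ : 0 < ∫ α in Ioo (0:ℝ) 1, μ α)
    (γ : ℝ) (hγ : γ ∈ Ioo (0:ℝ) (1/2))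
    (hγμ : (∫ α in Ioo γ (1 - γ), μ α) = ((1 - γ) / 2) * ∫ α in Ioo (0:ℝ) 1, μ α) :
    ∀ η ∈ Ioo (0:ℝ) (π/2), ∀ p : ℂ, p ∈ Complex.slitPlane → |p.arg| ≤ π - η →
      (‖p‖ ≤ 1 →
        (min (Real.sin (γ * π / 2)) (min (Real.sin (γ * π)) (Real.sqrt 2 / 2)) *
            ((1 - γ) / 2) * (∫ α in Ioo (0:ℝ) 1, μ α)) * ‖p‖ ^ (1 - γ) ≤
          ‖∫ α in Ioo (0:ℝ) 1, p ^ (α : ℂ) * (μ α : ℂ)‖) ∧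
      (1 < ‖p‖ →
        (min (Real.sin (γ * π / 2)) (min (Real.sin (γ * π)) (Real.sqrt 2 / 2)) *
            ((1 - γ) / 2) * (∫ α in Ioo (0:ℝ) 1, μ α)) * ‖p‖ ^ γ ≤
          ‖∫ α in Ioo (0:ℝ) 1, p ^ (α : ℂ) * (μ α : ℂ)‖) := by
  intro η hη p hp hparg
  have hp0 : p ≠ 0 := Complex.slitPlane_ne_zero hp
  set r := ‖p‖ with hrdef
  have hr0 : 0 < r := norm_pos_iff.mpr hp0
  set θ := p.arg with hθdef
  set t := |θ| with htdef
  have ht0 : 0 ≤ t := abs_nonneg θ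
  have htπ : t < π := lt_of_le_of_lt hparg (by linarith [hη.1])
  set m := max (t - π / 2) 0 with hm
  have hγ0 := hγ.1
  have hγ2 := hγ.2
  have hπ := Real.pi_pos
  set c0 := min (Real.sin (γ * π / 2)) (min (Real.sin (γ * π)) (Real.sqrt 2 / 2)) with hc0
  have hm0 : 0 ≤ m := le_max_right _ _
  have hmt : m ≤ t := max_le (by linarith) ht0
  have htm : t - m ≤ π / 2 := by
    rcases le_total t (π / 2) with h | h
    · linarith
    · have : m = t - π / 2 := max_eq_left (by linarith)
      linarith
  have hmhalf : m ≤ π / 2 := by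
    rcases le_total (t - π / 2) 0 with h | h
    · rw [hm, max_eq_right h]; linarith
    · rw [hm, max_eq_left h]; linarith
  -- pointwise nonnegativity of the cosine factor
  have hcosA : ∀ α ∈ Icc (0 : ℝ) 1, 0 ≤ Real.cos (α * t - m) := by
    intro α hα
    apply Real.cos_nonneg_of_mem_Icc
    have h1 : 0 ≤ α * t := mul_nonneg hα.1 ht0
    have h2 : α * t ≤ t := by nlinarith [hα.2]
    constructor
    · linarith
    · linarith
  -- pointwise lower bound on the middle interval
  have hcosB : ∀ α ∈ Icc γ (1 - γ), c0 ≤ Real.cos (α * t - m) := by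
    intro α hα
    have hα0 : 0 ≤ α := le_trans hγ0.le hα.1
    have hαt0 : 0 ≤ α * t := mul_nonneg hα0 ht0
    rcases le_total t (π / 2) with hcase | hcase
    · have hm' : m = 0 := max_eq_right (by linarith)
      rw [hm', sub_zero]
      have h1 : α * t ≤ (1 - γ) * (π / 2) := by nlinarith [hα.2]
      have h2 : Real.cos ((1 - γ) * (π / 2)) ≤ Real.cos (α * t) :=
        Real.cos_le_cos_of_nonneg_of_le_pi hαt0 (by nlinarith) h1
      have heq : Real.cos ((1 - γ) * (π / 2)) = Real.sin (γ * π / 2) := by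
        rw [show (1 - γ) * (π / 2) = π / 2 - γ * π / 2 by ring, Real.cos_pi_div_two_sub]
      calc c0 ≤ Real.sin (γ * π / 2) := min_le_left _ _
        _ = Real.cos ((1 - γ) * (π / 2)) := heq.symm
        _ ≤ _ := h2
    · have hm' : m = t - π / 2 := max_eq_left (by linarith)
      have harg : α * t - m = π / 2 - (1 - α) * t := by rw [hm']; ring
      rw [harg, Real.cos_pi_div_two_sub]
      have hx1 : γ * π / 2 ≤ (1 - α) * t := by nlinarith [hα.2]
      have hx2 : (1 - α) * t ≤ (1 - γ) * π := by nlinarith [hα.1, htπ.le]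
      rcases le_total ((1 - α) * t) (π / 2) with hc2 | hc2
      · have h3 : Real.sin (γ * π / 2) ≤ Real.sin ((1 - α) * t) :=
          Real.sin_le_sin_of_le_of_le_pi_div_two (by nlinarith) hc2 hx1
        exact le_trans (min_le_left _ _) h3
      · have h4 : Real.sin (γ * π) ≤ Real.sin (π - (1 - α) * t) :=
          Real.sin_le_sin_of_le_of_le_pi_div_two (by nlinarith) (by linarith)
            (by nlinarith)
        rw [Real.sin_pi_sub] at h4
        exact le_trans (le_trans (min_le_right _ _) (min_le_left _ _)) h4
  -- the rotation angle
  set φ : ℝ := if 0 ≤ θ then m else -m with hφ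
  have hcosarg : ∀ α : ℝ, Real.cos (θ * α + -φ) = Real.cos (α * t - m) := by
    intro α
    by_cases h : 0 ≤ θ
    · have htθ : t = θ := abs_of_nonneg h
      rw [hφ, if_pos h, htθ]; ring_nf
    · have htθ : t = -θ := abs_of_neg (not_le.mp h)
      rw [hφ, if_neg h, htθ, show θ * α + - -m = -(α * -θ - m) by ring, Real.cos_neg]
  -- pointwise identity for the rotated integrand
  have hkey : ∀ α : ℝ,
      (Complex.exp (Complex.I * (-φ : ℝ)) * (p ^ (α : ℂ) * (μ α : ℂ))).re
        = (r ^ α * Real.cos (α * t - m)) * μ α := by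
    intro α
    have h1 : Complex.exp (Complex.I * (-φ : ℝ)) * (p ^ (α : ℂ) * (μ α : ℂ))
        = Complex.exp (Complex.log p * α + Complex.I * (-φ : ℝ)) * (μ α : ℂ) := by
      rw [Complex.cpow_def_of_ne_zero hp0, Complex.exp_add]; ring
    rw [h1]
    have hre : (Complex.log p * (α : ℂ) + Complex.I * (-φ : ℝ)).re = Real.log r * α := by
      simp [Complex.log_re, hrdef]
    have him : (Complex.log p * (α : ℂ) + Complex.I * (-φ : ℝ)).im = θ * α + -φ := by
      simp [Complex.log_im, hθdef]
    have : (Complex.exp (Complex.log p * α + Complex.I * (-φ : ℝ)) * (μ α : ℂ)).re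
        = (Complex.exp (Complex.log p * α + Complex.I * (-φ : ℝ))).re * μ α := by
      simp [Complex.mul_re]
    rw [this, Complex.exp_re, hre, him, hcosarg α, Real.rpow_def_of_pos hr0]
  -- integrability facts
  have hcont : Continuous fun α : ℝ => p ^ (α : ℂ) :=
    Continuous.const_cpow (Complex.continuous_ofReal) (Or.inl hp0)
  have habs_cpow : ∀ α : ℝ, ‖p ^ (α : ℂ)‖ = r ^ α := by
    intro α
    rw [Complex.norm_cpow_of_ne_zero hp0]
    simp [hrdef]
  have hbound : ∀ α ∈ Ioo (0 : ℝ) 1, r ^ α ≤ max 1 r := by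
    intro α hα
    rcases le_total r 1 with h | h
    · exact le_trans (Real.rpow_le_one hr0.le h hα.1.le) (le_max_left _ _)
    · calc r ^ α ≤ r ^ (1 : ℝ) := Real.rpow_le_rpow_of_exponent_le h hα.2.le
        _ = r := Real.rpow_one r
        _ ≤ max 1 r := le_max_right _ _
  have hf_int : IntegrableOn (fun α : ℝ => p ^ (α : ℂ) * (μ α : ℂ)) (Ioo (0:ℝ) 1) := by
    apply Integrable.bdd_mul (c := max 1 r) (hμ_int.ofReal)
      (hcont.aestronglyMeasurable.restrict)
    filter_upwards [ae_restrict_mem measurableSet_Ioo] with α hα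
    rw [habs_cpow]
    exact hbound α hα
  have hg_int : IntegrableOn (fun α => (r ^ α * Real.cos (α * t - m)) * μ α) (Ioo 0 1) := by
    apply Integrable.bdd_mul (c := max 1 r) hμ_int
    · have hrexp : Continuous fun α : ℝ => r ^ α := by
        have he : (fun α : ℝ => r ^ α) = fun α : ℝ => Real.exp (Real.log r * α) :=
          funext fun α => Real.rpow_def_of_pos hr0 α
        rw [he]
        exact Real.continuous_exp.comp (continuous_const.mul continuous_id)
      exact ((hrexp.mul
        ((Real.continuous_cos.comp (by continuity)))).aestronglyMeasurable.restrict)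
    · filter_upwards [ae_restrict_mem measurableSet_Ioo] with α hα
      rw [Real.norm_eq_abs, abs_mul]
      calc |r ^ α| * |Real.cos (α * t - m)| ≤ r ^ α * 1 := by
            apply mul_le_mul
            · rw [abs_of_nonneg (Real.rpow_nonneg hr0.le α)]
            · exact Real.abs_cos_le_one _
            · exact abs_nonneg _
            · exact Real.rpow_nonneg hr0.le α
        _ = r ^ α := mul_one _
        _ ≤ max 1 r := hbound α hα
  -- the rotated real part is at most the absolute value of the integral
  set I := ∫ α in Ioo (0 : ℝ) 1, p ^ (α : ℂ) * (μ α : ℂ) with hI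
  have step2 : (∫ α in Ioo (0 : ℝ) 1, (r ^ α * Real.cos (α * t - m)) * μ α)
      ≤ ‖I‖ := by
    have hrot_int : Integrable (fun α : ℝ => Complex.exp (Complex.I * (-φ : ℝ))
        * (p ^ (α : ℂ) * (μ α : ℂ))) (volume.restrict (Ioo (0:ℝ) 1)) :=
      hf_int.const_mul _
    have e1 : (∫ α in Ioo (0 : ℝ) 1, (r ^ α * Real.cos (α * t - m)) * μ α)
        = (∫ α in Ioo (0 : ℝ) 1, (Complex.exp (Complex.I * (-φ : ℝ))
            * (p ^ (α : ℂ) * (μ α : ℂ))).re) := by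
      refine integral_congr_ae (Filter.Eventually.of_forall fun α => ?_)
      exact (hkey α).symm
    have e2 : (∫ α in Ioo (0 : ℝ) 1, (Complex.exp (Complex.I * (-φ : ℝ))
            * (p ^ (α : ℂ) * (μ α : ℂ))).re)
        = (Complex.exp (Complex.I * (-φ : ℝ)) * I).re := by
      rw [← integral_const_mul]
      exact integral_re hrot_int
    have e3 : (Complex.exp (Complex.I * (-φ : ℝ)) * I).re
        ≤ ‖Complex.exp (Complex.I * (-φ : ℝ)) * I‖ := Complex.re_le_norm _
    have e4 : ‖Complex.exp (Complex.I * (-φ : ℝ)) * I‖ = ‖I‖ := by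
      rw [norm_mul, Complex.norm_exp]
      simp
    rw [e1, e2]
    rw [e4] at e3
    exact e3
  -- master bound
  have master : ∀ ex : ℝ, (∀ α ∈ Icc γ (1 - γ), r ^ ex ≤ r ^ α) →
      (c0 * ((1 - γ) / 2) * ∫ α in Ioo (0 : ℝ) 1, μ α) * r ^ ex ≤ ‖I‖ := by
    intro ex hex
    have hsub : Ioo γ (1 - γ) ⊆ Ioo (0 : ℝ) 1 := Ioo_subset_Ioo hγ0.le (by linarith)
    have h1 : (∫ α in Ioo γ (1 - γ), (c0 * r ^ ex) * μ α)
        ≤ ∫ α in Ioo γ (1 - γ), (r ^ α * Real.cos (α * t - m)) * μ α := by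
      apply setIntegral_mono_on ((hμ_int.mono_set hsub).const_mul _)
        (hg_int.mono_set hsub) measurableSet_Ioo
      intro α hα
      have hμα : 0 ≤ μ α := hμ_nonneg α (hsub hα)
      have hαIcc : α ∈ Icc (0:ℝ) 1 := ⟨(hsub hα).1.le, (hsub hα).2.le⟩
      have hc : c0 ≤ Real.cos (α * t - m) := hcosB α ⟨hα.1.le, hα.2.le⟩
      have hr' : r ^ ex ≤ r ^ α := hex α ⟨hα.1.le, hα.2.le⟩
      have hmm : c0 * r ^ ex ≤ r ^ α * Real.cos (α * t - m) := by
        calc c0 * r ^ ex ≤ Real.cos (α * t - m) * r ^ α :=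
              mul_le_mul hc hr' (Real.rpow_nonneg hr0.le ex) (hcosA α hαIcc)
          _ = r ^ α * Real.cos (α * t - m) := mul_comm _ _
      exact mul_le_mul_of_nonneg_right hmm hμα
    have h2 : (∫ α in Ioo γ (1 - γ), (r ^ α * Real.cos (α * t - m)) * μ α)
        ≤ ∫ α in Ioo (0 : ℝ) 1, (r ^ α * Real.cos (α * t - m)) * μ α := by
      apply setIntegral_mono_set hg_int ?_ (hsub.eventuallyLE)
      filter_upwards [ae_restrict_mem measurableSet_Ioo] with α hα
      exact mul_nonneg (mul_nonneg (Real.rpow_nonneg hr0.le α)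
        (hcosA α ⟨hα.1.le, hα.2.le⟩)) (hμ_nonneg α hα)
    have h3 : (∫ α in Ioo γ (1 - γ), (c0 * r ^ ex) * μ α)
        = (c0 * ((1 - γ) / 2) * ∫ α in Ioo (0 : ℝ) 1, μ α) * r ^ ex := by
      rw [integral_const_mul, hγμ]; ring
    rw [← h3]
    exact le_trans h1 (le_trans h2 step2)
  constructor
  · intro hr1
    exact master (1 - γ) fun α hα => Real.rpow_le_rpow_of_exponent_ge hr0 hr1 hα.2
  · intro hr1
    exact master γ fun α hα => Real.rpow_le_rpow_of_exponent_le hr1.le hα.1
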